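/- Assume that bar(I) is contained in I, where I is defined as below. If C in V satisfies bar(C) - C in I, then for every g in Z[X]^{W0} one has bar(g . C) - g . C in I; that is, the class of g . C in F_l = V/I is fixed by the induced bar involution. (Bar-invariance of s_{lambda1*} . C_{lambda0}; step (a) of the proof of Theorem 1.2) -/

import Mathlib

open Finsupp LaurentPolynomial

noncomputable section

/-- The ring `K = ℤ[t^{1/2}, t^{-1/2}]`: Laurent polynomials over `ℤ` in the
variable `T = t^{1/2}`. -/
abbrev K : Type := LaurentPolynomial ℤ

/-- The element `t^{1/2}` of `K`. -/
def tHalf : K := T 1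

/-- The bar involution of `K`, determined by `t^{1/2} ↦ t^{-1/2}`. -/
def conjK : K →+* K := (LaurentPolynomial.invert (R := ℤ)).toRingHom

/-- `V`: the free `K`-module with basis `{|λ⟩ : λ ∈ a_ℤ^*}` indexed by the weight
lattice `Λ`. -/
abbrev V (Λ : Type) : Type := Λ →₀ K

/-- The basis element `|λ⟩` of `V`. -/
def ket {Λ : Type} (lam : Λ) : V Λ := Finsupp.single lam 1

/-- The data of (the weight lattice of) a reduced finite crystallographic root
system: the weight lattice `Λ = a_ℤ^*`, the (finite) Weyl group `W = W₀` acting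
on `Λ` through `σ`, the simple reflections `s i`, the simple roots `α i`, the
pairings `pair i = ⟨·, α_i^∨⟩` with the simple coroots, the finite set
`posRoots` of pairings `⟨·, α^∨⟩` with the coroots `α^∨` of the positive roots
`α ∈ R⁺`, the half-sum `ρ` of the positive roots (assumed to lie in `Λ`), the
longest element `w0` (of length `posRoots.card`), and the sign character `det`. -/
structure RootData (Λ W : Type) [AddCommGroup Λ] [Group W] [Fintype W] where
  n : ℕ
  σ : W →* Multiplicative (AddAut Λ)
  s : Fin n → W
  α : Fin n → Λ
  pair : Fin n → Λ →+ ℤ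
  posRoots : Finset (Λ →+ ℤ)
  ρ : Λ
  w0 : W
  det : W →* ℤˣ
  /-- `s i` acts on `Λ` as the reflection in the simple root `α i`. -/
  reflect : ∀ (i : Fin n) (lam : Λ), Multiplicative.toAdd (σ (s i)) lam = lam - pair i lam • α i
  /-- crystallographic normalization `⟨α_i, α_i^∨⟩ = 2`. -/
  pair_alpha_self : ∀ i : Fin n, pair i (α i) = 2
  /-- the simple reflections are involutions. -/
  s_sq : ∀ i : Fin n, s i * s i = 1
  /-- `W₀` is generated by the simple reflections. -/
  gen_s : Subgroup.closure (Set.range s) = ⊤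
  /-- `⟨ρ, α_i^∨⟩ = 1` for every simple coroot. -/
  pair_rho : ∀ i : Fin n, pair i ρ = 1
  /-- each simple coroot is the coroot of a positive root. -/
  pair_mem : ∀ i : Fin n, pair i ∈ posRoots
  /-- the Weyl group permutes the (co)roots up to sign. -/
  roots_perm : ∀ (w : W), ∀ f ∈ posRoots,
    (∃ g ∈ posRoots, ∀ lam, f (Multiplicative.toAdd (σ w) lam) = g lam) ∨
    (∃ g ∈ posRoots, ∀ lam, f (Multiplicative.toAdd (σ w) lam) = - g lam)
  /-- `w0` sends every positive root to a negative root (so `w0` is the longest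
  element, of length `posRoots.card`). -/
  w0_neg : ∀ f ∈ posRoots, ∃ g ∈ posRoots, ∀ lam, f (Multiplicative.toAdd (σ w0) lam) = - g lam
  /-- `det` is the sign character. -/
  det_s : ∀ i : Fin n, det (s i) = -1

namespace RootData

variable {Λ W : Type} [AddCommGroup Λ] [Group W] [Fintype W]

/-- The dot action `w ∘ λ = w(λ + ρ) - ρ`. -/
def dot (D : RootData Λ W) (w : W) (lam : Λ) : Λ := Multiplicative.toAdd (D.σ w) (lam + D.ρ) - D.ρ

/-- `λ^{(1)} = λ - j • α_i`, where `⟨λ + ρ, α_i^∨⟩ = k l + j` with `j ∈ {0, …, l-1}`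
(relative to the index `i`). -/
def lamOne (D : RootData Λ W) (l : ℕ) (i : Fin D.n) (lam : Λ) : Λ :=
  lam - (D.pair i (lam + D.ρ) % (l : ℤ)) • D.α i

/-- A weight `λ` is dominant when `⟨λ + ρ, α_i^∨⟩ > 0` for all `i`. -/
def dominant (D : RootData Λ W) (lam : Λ) : Prop :=
  ∀ i : Fin D.n, 0 < D.pair i (lam + D.ρ)

/-- `λ₀ ∈ Π_l`: an `l`-restricted dominant weight. -/
def restricted (D : RootData Λ W) (l : ℕ) (lam : Λ) : Prop :=
  D.dominant lam ∧ ∀ i : Fin D.n, D.pair i lam ≤ (l : ℤ) - 1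

/-- The `K`-submodule `I` of `V` spanned by the straightening elements
(a), (b), (c). -/
def Idl (D : RootData Λ W) (l : ℕ) : Submodule K (V Λ) :=
  Submodule.span K
    ({x | ∃ (i : Fin D.n) (lam : Λ),
        (∃ k : ℤ, 0 ≤ k ∧ D.pair i (lam + D.ρ) = k * l) ∧
        x = ket (D.dot (D.s i) lam) + ket lam} ∪
     {x | ∃ (i : Fin D.n) (lam : Λ),
        0 < D.pair i (lam + D.ρ) ∧ D.pair i (lam + D.ρ) < (l : ℤ) ∧
        x = ket (D.dot (D.s i) lam) + tHalf • ket lam} ∪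
     {x | ∃ (i : Fin D.n) (lam : Λ),
        (l : ℤ) < D.pair i (lam + D.ρ) ∧ ¬ ((l : ℤ) ∣ D.pair i (lam + D.ρ)) ∧
        x = ket (D.dot (D.s i) lam) + tHalf • ket (D.dot (D.s i) (D.lamOne l i lam)) +
            ket (D.lamOne l i lam) + tHalf • ket lam})

/-- The operator `X^μ · : V → V` of the level `-(l+h)` action:
`X^μ · |γ⟩ = |γ - l w0(μ)⟩`. -/
def opX (D : RootData Λ W) (l : ℕ) (mu : Λ) : V Λ →ₗ[K] V Λ :=
  Finsupp.lmapDomain K K (fun gam => gam - l • Multiplicative.toAdd (D.σ D.w0) mu)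

/-- The level `-(l+h)` action of an element `g` of the group algebra `K[X]`
(with `K`-coefficients) on `V`. -/
def actKX (D : RootData Λ W) (l : ℕ) (g : Λ →₀ K) (v : V Λ) : V Λ :=
  g.sum fun mu c => c • (D.opX l mu v)

/-- The level `-(l+h)` action of an element `g` of `ℤ[X]` on `V`. -/
def actZX (D : RootData Λ W) (l : ℕ) (g : Λ →₀ ℤ) (v : V Λ) : V Λ :=
  g.sum fun mu c => c • (D.opX l mu v)

/-- `N_λ = #{α ∈ R⁺ : ⟨λ + ρ, α^∨⟩ ∈ lℤ}`. -/
def Ncount (D : RootData Λ W) (l : ℕ) (lam : Λ) : ℕ :=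
  (D.posRoots.filter (fun f => (l : ℤ) ∣ f (lam + D.ρ))).card

/-- The coefficient `(-1)^{l(w0)} (t^{-1/2})^{l(w0) - N_λ}` appearing in the bar
involution, where `l(w0) = Card R⁺`. -/
def barCoef (D : RootData Λ W) (l : ℕ) (lam : Λ) : K :=
  ((-1 : K) ^ D.posRoots.card) * T ((D.Ncount l lam : ℤ) - (D.posRoots.card : ℤ))

/-- The bar involution of `V`:
`bar(c|λ⟩) = c̄ (-1)^{l(w0)} (t^{-1/2})^{l(w0)-N_λ} |w0 ∘ λ⟩`. -/
def barV (D : RootData Λ W) (l : ℕ) (v : V Λ) : V Λ :=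
  v.sum fun lam c => (conjK c * D.barCoef l lam) • ket (D.dot D.w0 lam)

/-- `V⁺`: the `ℤ[t^{1/2}]`-span of the `|μ⟩` inside `V`, i.e. the elements all
of whose coefficients are polynomials in `t^{1/2}`. -/
def inVplus {Λ : Type} (b : V Λ) : Prop :=
  ∀ (mu : Λ) (m : ℤ), m < 0 → AddMonoidAlgebra.coeff (b mu) m = 0

/-- Membership in `I + t^{1/2} V⁺`. -/
def inIplus (D : RootData Λ W) (l : ℕ) (x : V Λ) : Prop :=
  ∃ a ∈ D.Idl l, ∃ b : V Λ, inVplus b ∧ x = a + tHalf • b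

/-- The Weyl numerator `∑_{w ∈ W₀} det(w) X^{w ν}` in `K[X]`. -/
def weylNumer (D : RootData Λ W) (nu : Λ) : AddMonoidAlgebra K Λ :=
  ∑ w : W, ((D.det w : ℤˣ) : ℤ) • AddMonoidAlgebra.single (Multiplicative.toAdd (D.σ w) nu) (1 : K)

/-- `g` is the Weyl character `s_ν ∈ ℤ[X]^{W₀} ⊆ K[X]`: it has integer
coefficients, is `W₀`-invariant, and satisfies the Weyl character formula
`(∑_w det(w) X^{wρ}) · s_ν = ∑_w det(w) X^{w(ν+ρ)}`. -/
def IsWeylChar (D : RootData Λ W) (nu : Λ) (g : AddMonoidAlgebra K Λ) : Prop :=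
  (∀ mu : Λ, ∃ z : ℤ, AddMonoidAlgebra.coeff g mu = (z : K)) ∧
  (∀ (w : W) (mu : Λ), AddMonoidAlgebra.coeff g (Multiplicative.toAdd (D.σ w) mu) = AddMonoidAlgebra.coeff g mu) ∧
  D.weylNumer D.ρ * g = D.weylNumer (nu + D.ρ)

end RootData

end

/-! ### Auxiliary machinery for Statement 5 -/

noncomputable section AuxSection

namespace RootDataAux

open RootData

variable {Λ W : Type} [AddCommGroup Λ] [Group W] [Fintype W]

/-- Shift of the basis of `V` by `ν`. -/
def shf (ν : Λ) (v : V Λ) : V Λ := Finsupp.mapDomain (· + ν) v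

lemma shf_ket (ν μ : Λ) : shf ν (ket μ) = ket (μ + ν) := by
  simp [shf, ket, Finsupp.mapDomain_single]

lemma shf_add (ν : Λ) (u v : V Λ) : shf ν (u + v) = shf ν u + shf ν v :=
  Finsupp.mapDomain_add

lemma shf_smul (ν : Λ) (c : K) (v : V Λ) : shf ν (c • v) = c • shf ν v :=
  Finsupp.mapDomain_smul c v

variable (D : RootData Λ W) (l : ℕ)

lemma dot_s (i : Fin D.n) (lam : Λ) :
    D.dot (D.s i) lam = lam - D.pair i (lam + D.ρ) • D.α i := by
  unfold RootData.dot
  rw [D.reflect]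
  abel

lemma dot_s_dot_s (i : Fin D.n) (lam : Λ) :
    D.dot (D.s i) (D.dot (D.s i) lam) = lam := by
  unfold RootData.dot
  rw [sub_add_cancel, ← AddAut.add_apply, ← toAdd_mul, ← map_mul, D.s_sq, map_one]
  simp

lemma pair_sub_smul (i : Fin D.n) (Y : Λ) (c : ℤ) :
    D.pair i (Y - c • D.α i + D.ρ) = D.pair i (Y + D.ρ) - 2 * c := by
  have h : Y - c • D.α i + D.ρ = (Y + D.ρ) - c • D.α i := by abel
  rw [h, map_sub, map_zsmul, D.pair_alpha_self, smul_eq_mul]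
  ring

lemma pair_dot_s (i : Fin D.n) (lam : Λ) :
    D.pair i (D.dot (D.s i) lam + D.ρ) = - D.pair i (lam + D.ρ) := by
  rw [dot_s, pair_sub_smul]
  ring

/-! #### The generators of `I` -/

lemma mem_genA (i : Fin D.n) (lam : Λ)
    (h : ∃ k : ℤ, 0 ≤ k ∧ D.pair i (lam + D.ρ) = k * l) :
    ket (D.dot (D.s i) lam) + ket lam ∈ D.Idl l :=
  Submodule.subset_span (Or.inl (Or.inl ⟨i, lam, h, rfl⟩))

lemma mem_genB (i : Fin D.n) (lam : Λ) (h1 : 0 < D.pair i (lam + D.ρ))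
    (h2 : D.pair i (lam + D.ρ) < (l : ℤ)) :
    ket (D.dot (D.s i) lam) + tHalf • ket lam ∈ D.Idl l :=
  Submodule.subset_span (Or.inl (Or.inr ⟨i, lam, h1, h2, rfl⟩))

lemma mem_genC (i : Fin D.n) (lam : Λ) (h1 : (l : ℤ) < D.pair i (lam + D.ρ))
    (h2 : ¬ ((l : ℤ) ∣ D.pair i (lam + D.ρ))) :
    ket (D.dot (D.s i) lam) + tHalf • ket (D.dot (D.s i) (D.lamOne l i lam)) +
      ket (D.lamOne l i lam) + tHalf • ket lam ∈ D.Idl l :=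
  Submodule.subset_span (Or.inr ⟨i, lam, h1, h2, rfl⟩)

/-- Type (a) generators for arbitrary multiples of `l` (also negative ones). -/
lemma mem_genA' (i : Fin D.n) (lam : Λ)
    (hd : (l : ℤ) ∣ D.pair i (lam + D.ρ)) :
    ket (D.dot (D.s i) lam) + ket lam ∈ D.Idl l := by
  obtain ⟨k, hk⟩ := hd
  rcases le_or_gt 0 k with h | h
  · exact mem_genA D l i lam ⟨k, h, by rw [hk]; ring⟩
  · have h2 : D.pair i (D.dot (D.s i) lam + D.ρ) = (-k) * (l : ℤ) := by
      rw [pair_dot_s, hk]; ring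
    have h3 := mem_genA D l i (D.dot (D.s i) lam) ⟨-k, by linarith, h2⟩
    rw [dot_s_dot_s] at h3
    have e : ket lam + ket (D.dot (D.s i) lam) =
        ket (D.dot (D.s i) lam) + ket lam := add_comm _ _
    rwa [e] at h3

lemma lamOne_eq (i : Fin D.n) (X : Λ) :
    D.lamOne l i X = X - (D.pair i (X + D.ρ) % (l : ℤ)) • D.α i := rfl

/-- The 4-term "shape" appearing in the straightening relations. -/
def shapeJ (i : Fin D.n) (X : Λ) (j : ℤ) : V Λ :=
  ket (D.dot (D.s i) X) + tHalf • ket (D.dot (D.s i) (X - j • D.α i)) +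
    ket (X - j • D.α i) + tHalf • ket X

/-- The central membership lemma: the 4-term shape at any weight `X` whose
pairing is `≡ j mod l` with `0 < j < l` lies in `I`. -/
lemma shapeJ_mem (hl : 0 < l) (i : Fin D.n) (X : Λ) (j : ℤ)
    (hmod : D.pair i (X + D.ρ) % (l : ℤ) = j) (hj0 : 0 < j) :
    shapeJ D i X j ∈ D.Idl l := by
  have hlz : (0 : ℤ) < (l : ℤ) := by exact_mod_cast hl
  have hjl : j < (l : ℤ) := by rw [← hmod]; exact Int.emod_lt_of_pos _ hlz
  have hb0 : D.pair i (X + D.ρ) ≠ 0 := by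
    intro h; rw [h] at hmod; simp at hmod; omega
  have hbl : D.pair i (X + D.ρ) ≠ (l : ℤ) := by
    intro h; rw [h, Int.emod_self] at hmod; omega
  have htri : D.pair i (X + D.ρ) < 0 ∨
      (0 < D.pair i (X + D.ρ) ∧ D.pair i (X + D.ρ) < (l : ℤ)) ∨
      (l : ℤ) < D.pair i (X + D.ρ) := by omega
  rcases htri with hneg | ⟨hpos, hlt⟩ | hgt
  · -- pairing negative: the shape is a type (c) generator at η = X + (j - b)•α
    have hpen : D.pair i (X + (j - D.pair i (X + D.ρ)) • D.α i + D.ρ) =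
        2 * j - D.pair i (X + D.ρ) := by
      have e : X + (j - D.pair i (X + D.ρ)) • D.α i + D.ρ =
          (X + D.ρ) + (j - D.pair i (X + D.ρ)) • D.α i := by abel
      rw [e, map_add, map_zsmul, D.pair_alpha_self, smul_eq_mul]
      ring
    obtain ⟨q, hqe⟩ : ∃ q : ℤ, D.pair i (X + D.ρ) = (l : ℤ) * q + j :=
      ⟨D.pair i (X + D.ρ) / (l : ℤ), by rw [← hmod]; exact (Int.mul_ediv_add_emod _ _).symm⟩
    have hql : q < 0 := by
      by_contra hq0
      push_neg at hq0
      have : 0 ≤ (l : ℤ) * q := mul_nonneg hlz.le hq0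
      omega
    have hble : D.pair i (X + D.ρ) ≤ j - l := by
      have h1 : (l : ℤ) * q ≤ (l : ℤ) * (-1) :=
        mul_le_mul_of_nonneg_left (by omega) hlz.le
      rw [mul_neg_one] at h1
      omega
    have hgt2 : (l : ℤ) < 2 * j - D.pair i (X + D.ρ) := by omega
    have hmod2 : (2 * j - D.pair i (X + D.ρ)) % (l : ℤ) = j := by
      have e : 2 * j - D.pair i (X + D.ρ) = j + (l : ℤ) * (-q) := by rw [hqe]; ring
      rw [e, Int.add_mul_emod_self_left]
      exact Int.emod_eq_of_lt (by omega) hjl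
    have hnd2 : ¬ ((l : ℤ) ∣ 2 * j - D.pair i (X + D.ρ)) := by
      intro hdvd
      rw [Int.emod_eq_zero_of_dvd hdvd] at hmod2; omega
    have hgen := mem_genC D l i (X + (j - D.pair i (X + D.ρ)) • D.α i)
      (by rw [hpen]; exact hgt2) (by rw [hpen]; exact hnd2)
    have e0 : D.lamOne l i (X + (j - D.pair i (X + D.ρ)) • D.α i) =
        (X + (j - D.pair i (X + D.ρ)) • D.α i) - j • D.α i := by
      rw [lamOne_eq, hpen, hmod2]
    rw [e0] at hgen
    have e1 : D.dot (D.s i) (X + (j - D.pair i (X + D.ρ)) • D.α i) = X - j • D.α i := by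
      rw [dot_s, hpen]; module
    have e2 : (X + (j - D.pair i (X + D.ρ)) • D.α i) - j • D.α i = D.dot (D.s i) X := by
      rw [dot_s]; module
    have e3 : D.dot (D.s i) ((X + (j - D.pair i (X + D.ρ)) • D.α i) - j • D.α i) = X := by
      rw [e2, dot_s_dot_s]
    rw [e1, e3, e2] at hgen
    have e4 : D.dot (D.s i) (X - j • D.α i) = X + (j - D.pair i (X + D.ρ)) • D.α i := by
      rw [dot_s, pair_sub_smul]; module
    have goal_eq : shapeJ D i X j =
        ket (X - j • D.α i) + tHalf • ket X + ket (D.dot (D.s i) X) +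
          tHalf • ket (X + (j - D.pair i (X + D.ρ)) • D.α i) := by
      simp only [shapeJ]; rw [e4]; abel
    rw [goal_eq]; exact hgen
  · -- 0 < pairing < l: the shape is twice a type (b) generator
    have hbj : D.pair i (X + D.ρ) = j := by
      rw [← hmod]; exact (Int.emod_eq_of_lt (by omega) hlt).symm
    have m1 := mem_genB D l i X hpos hlt
    have h2 : D.dot (D.s i) X = X - j • D.α i := by rw [dot_s, hbj]
    have h1 : D.dot (D.s i) (X - j • D.α i) = X := by
      rw [dot_s, pair_sub_smul, hbj]; module
    rw [h2] at m1
    have goal_eq : shapeJ D i X j =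
        (ket (X - j • D.α i) + tHalf • ket X) + (ket (X - j • D.α i) + tHalf • ket X) := by
      simp only [shapeJ]; rw [h1, h2]; abel
    rw [goal_eq]; exact add_mem m1 m1
  · -- pairing > l: the shape is a type (c) generator at X itself
    have hnd : ¬ ((l : ℤ) ∣ D.pair i (X + D.ρ)) := by
      intro hdvd
      rw [Int.emod_eq_zero_of_dvd hdvd] at hmod; omega
    have h := mem_genC D l i X hgt hnd
    rw [lamOne_eq, hmod] at h
    simpa only [shapeJ] using h

/-! #### The key lemmas: shifted generators (paired by the reflection) lie in `I` -/

lemma keyA (i : Fin D.n) (lam ν : Λ) (m : ℤ)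
    (hν : D.pair i ν = (l : ℤ) * m)
    (hd : (l : ℤ) ∣ D.pair i (lam + D.ρ)) :
    shf ν (ket (D.dot (D.s i) lam) + ket lam) +
      shf (ν - ((l : ℤ) * m) • D.α i) (ket (D.dot (D.s i) lam) + ket lam) ∈ D.Idl l := by
  have hA : D.pair i (lam + ν + D.ρ) = D.pair i (lam + D.ρ) + (l : ℤ) * m := by
    have e : lam + ν + D.ρ = (lam + D.ρ) + ν := by abel
    rw [e, map_add, hν]
  have hA' : D.pair i (lam + ν - ((l : ℤ) * m) • D.α i + D.ρ) =
      D.pair i (lam + D.ρ) - (l : ℤ) * m := by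
    rw [pair_sub_smul, hA]; ring
  have g1 := mem_genA' D l i (lam + ν) (by rw [hA]; exact dvd_add hd ⟨m, rfl⟩)
  have g2 := mem_genA' D l i (lam + ν - ((l : ℤ) * m) • D.α i)
    (by rw [hA']; exact dvd_sub hd ⟨m, rfl⟩)
  have r1 : D.dot (D.s i) lam + ν = D.dot (D.s i) (lam + ν - ((l : ℤ) * m) • D.α i) := by
    simp only [dot_s]; rw [hA']; module
  have r2 : D.dot (D.s i) lam + (ν - ((l : ℤ) * m) • D.α i) = D.dot (D.s i) (lam + ν) := by
    simp only [dot_s]; rw [hA]; module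
  have r3 : lam + (ν - ((l : ℤ) * m) • D.α i) = lam + ν - ((l : ℤ) * m) • D.α i := by
    module
  have eq : shf ν (ket (D.dot (D.s i) lam) + ket lam) +
      shf (ν - ((l : ℤ) * m) • D.α i) (ket (D.dot (D.s i) lam) + ket lam) =
      (ket (D.dot (D.s i) (lam + ν)) + ket (lam + ν)) +
        (ket (D.dot (D.s i) (lam + ν - ((l : ℤ) * m) • D.α i)) +
          ket (lam + ν - ((l : ℤ) * m) • D.α i)) := by
    simp only [shf_add, shf_ket]
    rw [r1, r2, r3]
    abel
  rw [eq]; exact add_mem g1 g2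

lemma keyA0 (i : Fin D.n) (lam ν : Λ)
    (hν : D.pair i ν = 0)
    (hd : (l : ℤ) ∣ D.pair i (lam + D.ρ)) :
    shf ν (ket (D.dot (D.s i) lam) + ket lam) ∈ D.Idl l := by
  have hA : D.pair i (lam + ν + D.ρ) = D.pair i (lam + D.ρ) := by
    have e : lam + ν + D.ρ = (lam + D.ρ) + ν := by abel
    rw [e, map_add, hν, add_zero]
  have g := mem_genA' D l i (lam + ν) (by rw [hA]; exact hd)
  have r : D.dot (D.s i) lam + ν = D.dot (D.s i) (lam + ν) := by
    simp only [dot_s]; rw [hA]; module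
  have eq : shf ν (ket (D.dot (D.s i) lam) + ket lam) =
      ket (D.dot (D.s i) (lam + ν)) + ket (lam + ν) := by
    simp only [shf_add, shf_ket]; rw [r]
  rw [eq]; exact g

lemma keyB (hl : 0 < l) (i : Fin D.n) (lam ν : Λ) (m : ℤ)
    (hν : D.pair i ν = (l : ℤ) * m)
    (h1 : 0 < D.pair i (lam + D.ρ)) (h2 : D.pair i (lam + D.ρ) < (l : ℤ)) :
    shf ν (ket (D.dot (D.s i) lam) + tHalf • ket lam) +
      shf (ν - ((l : ℤ) * m) • D.α i) (ket (D.dot (D.s i) lam) + tHalf • ket lam)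
      ∈ D.Idl l := by
  have hA : D.pair i (lam + ν + D.ρ) = D.pair i (lam + D.ρ) + (l : ℤ) * m := by
    have e : lam + ν + D.ρ = (lam + D.ρ) + ν := by abel
    rw [e, map_add, hν]
  have hmod : D.pair i (lam + ν + D.ρ) % (l : ℤ) = D.pair i (lam + D.ρ) := by
    rw [hA, Int.add_mul_emod_self_left]
    exact Int.emod_eq_of_lt h1.le h2
  have mem := shapeJ_mem D l hl i (lam + ν) (D.pair i (lam + D.ρ)) hmod h1
  have q1 : D.dot (D.s i) lam + ν = lam + ν - D.pair i (lam + D.ρ) • D.α i := by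
    rw [dot_s]; module
  have q2 : D.dot (D.s i) lam + (ν - ((l : ℤ) * m) • D.α i) = D.dot (D.s i) (lam + ν) := by
    simp only [dot_s]; rw [hA]; module
  have q3 : D.dot (D.s i) (lam + ν - D.pair i (lam + D.ρ) • D.α i) =
      lam + (ν - ((l : ℤ) * m) • D.α i) := by
    rw [dot_s, pair_sub_smul, hA]; module
  have eq : shf ν (ket (D.dot (D.s i) lam) + tHalf • ket lam) +
      shf (ν - ((l : ℤ) * m) • D.α i) (ket (D.dot (D.s i) lam) + tHalf • ket lam) =
      shapeJ D i (lam + ν) (D.pair i (lam + D.ρ)) := by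
    simp only [shapeJ, shf_add, shf_smul, shf_ket]
    rw [q1, q2, q3]
    abel
  rw [eq]; exact mem

lemma keyB0 (i : Fin D.n) (lam ν : Λ)
    (hν : D.pair i ν = 0)
    (h1 : 0 < D.pair i (lam + D.ρ)) (h2 : D.pair i (lam + D.ρ) < (l : ℤ)) :
    shf ν (ket (D.dot (D.s i) lam) + tHalf • ket lam) ∈ D.Idl l := by
  have hA : D.pair i (lam + ν + D.ρ) = D.pair i (lam + D.ρ) := by
    have e : lam + ν + D.ρ = (lam + D.ρ) + ν := by abel
    rw [e, map_add, hν, add_zero]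
  have g := mem_genB D l i (lam + ν) (by rw [hA]; exact h1) (by rw [hA]; exact h2)
  have r : D.dot (D.s i) lam + ν = D.dot (D.s i) (lam + ν) := by
    simp only [dot_s]; rw [hA]; module
  have eq : shf ν (ket (D.dot (D.s i) lam) + tHalf • ket lam) =
      ket (D.dot (D.s i) (lam + ν)) + tHalf • ket (lam + ν) := by
    simp only [shf_add, shf_smul, shf_ket]; rw [r]
  rw [eq]; exact g

lemma keyC (hl : 0 < l) (i : Fin D.n) (lam ν : Λ) (m : ℤ)
    (hν : D.pair i ν = (l : ℤ) * m)
    (h1 : (l : ℤ) < D.pair i (lam + D.ρ)) (h2 : ¬ ((l : ℤ) ∣ D.pair i (lam + D.ρ))) :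
    shf ν (ket (D.dot (D.s i) lam) + tHalf • ket (D.dot (D.s i) (D.lamOne l i lam)) +
        ket (D.lamOne l i lam) + tHalf • ket lam) +
      shf (ν - ((l : ℤ) * m) • D.α i) (ket (D.dot (D.s i) lam) +
        tHalf • ket (D.dot (D.s i) (D.lamOne l i lam)) +
        ket (D.lamOne l i lam) + tHalf • ket lam) ∈ D.Idl l := by
  have hlz : (0 : ℤ) < (l : ℤ) := by exact_mod_cast hl
  have hj0 : 0 < D.pair i (lam + D.ρ) % (l : ℤ) := by
    rcases (Int.emod_nonneg (D.pair i (lam + D.ρ)) (by omega : (l : ℤ) ≠ 0)).lt_or_eq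
      with h | h
    · exact h
    · exact absurd (Int.dvd_of_emod_eq_zero h.symm) h2
  have hA : D.pair i (lam + ν + D.ρ) = D.pair i (lam + D.ρ) + (l : ℤ) * m := by
    have e : lam + ν + D.ρ = (lam + D.ρ) + ν := by abel
    rw [e, map_add, hν]
  have hA' : D.pair i (lam + ν - ((l : ℤ) * m) • D.α i + D.ρ) =
      D.pair i (lam + D.ρ) - (l : ℤ) * m := by
    rw [pair_sub_smul, hA]; ring
  have hmodA : D.pair i (lam + ν + D.ρ) % (l : ℤ) = D.pair i (lam + D.ρ) % (l : ℤ) := by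
    rw [hA, Int.add_mul_emod_self_left]
  have hmodA' : D.pair i (lam + ν - ((l : ℤ) * m) • D.α i + D.ρ) % (l : ℤ) =
      D.pair i (lam + D.ρ) % (l : ℤ) := by
    rw [hA']
    have e : D.pair i (lam + D.ρ) - (l : ℤ) * m = D.pair i (lam + D.ρ) + (l : ℤ) * (-m) := by
      ring
    rw [e, Int.add_mul_emod_self_left]
  have memA := shapeJ_mem D l hl i (lam + ν) (D.pair i (lam + D.ρ) % (l : ℤ)) hmodA hj0
  have memA' := shapeJ_mem D l hl i (lam + ν - ((l : ℤ) * m) • D.α i)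
    (D.pair i (lam + D.ρ) % (l : ℤ)) hmodA' hj0
  -- weight identities
  have c1 : D.dot (D.s i) lam + ν =
      D.dot (D.s i) (lam + ν - ((l : ℤ) * m) • D.α i) := by
    simp only [dot_s]; rw [hA']; module
  have c2 : D.dot (D.s i) lam + (ν - ((l : ℤ) * m) • D.α i) = D.dot (D.s i) (lam + ν) := by
    simp only [dot_s]; rw [hA]; module
  have c3 : lam + (ν - ((l : ℤ) * m) • D.α i) = lam + ν - ((l : ℤ) * m) • D.α i := by
    module
  have c4 : lam - (D.pair i (lam + D.ρ) % (l : ℤ)) • D.α i + ν =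
      lam + ν - (D.pair i (lam + D.ρ) % (l : ℤ)) • D.α i := by
    module
  have c5 : lam - (D.pair i (lam + D.ρ) % (l : ℤ)) • D.α i + (ν - ((l : ℤ) * m) • D.α i) =
      lam + ν - ((l : ℤ) * m) • D.α i - (D.pair i (lam + D.ρ) % (l : ℤ)) • D.α i := by
    module
  have c6 : D.dot (D.s i) (lam - (D.pair i (lam + D.ρ) % (l : ℤ)) • D.α i) + ν =
      D.dot (D.s i) (lam + ν - ((l : ℤ) * m) • D.α i -
        (D.pair i (lam + D.ρ) % (l : ℤ)) • D.α i) := by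
    simp only [dot_s]
    rw [pair_sub_smul, pair_sub_smul, hA']
    module
  have c7 : D.dot (D.s i) (lam - (D.pair i (lam + D.ρ) % (l : ℤ)) • D.α i) +
      (ν - ((l : ℤ) * m) • D.α i) =
      D.dot (D.s i) (lam + ν - (D.pair i (lam + D.ρ) % (l : ℤ)) • D.α i) := by
    simp only [dot_s]
    rw [pair_sub_smul, pair_sub_smul, hA]
    module
  have eq : shf ν (ket (D.dot (D.s i) lam) +
        tHalf • ket (D.dot (D.s i) (D.lamOne l i lam)) +
        ket (D.lamOne l i lam) + tHalf • ket lam) +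
      shf (ν - ((l : ℤ) * m) • D.α i) (ket (D.dot (D.s i) lam) +
        tHalf • ket (D.dot (D.s i) (D.lamOne l i lam)) +
        ket (D.lamOne l i lam) + tHalf • ket lam) =
      shapeJ D i (lam + ν) (D.pair i (lam + D.ρ) % (l : ℤ)) +
        shapeJ D i (lam + ν - ((l : ℤ) * m) • D.α i)
          (D.pair i (lam + D.ρ) % (l : ℤ)) := by
    rw [lamOne_eq]
    simp only [shapeJ, shf_add, shf_smul, shf_ket]
    rw [c1, c2, c3, c6, c7, c4, c5]
    abel
  rw [eq]; exact add_mem memA memA'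

lemma keyC0 (hl : 0 < l) (i : Fin D.n) (lam ν : Λ)
    (hν : D.pair i ν = 0)
    (h1 : (l : ℤ) < D.pair i (lam + D.ρ)) (h2 : ¬ ((l : ℤ) ∣ D.pair i (lam + D.ρ))) :
    shf ν (ket (D.dot (D.s i) lam) + tHalf • ket (D.dot (D.s i) (D.lamOne l i lam)) +
        ket (D.lamOne l i lam) + tHalf • ket lam) ∈ D.Idl l := by
  have hlz : (0 : ℤ) < (l : ℤ) := by exact_mod_cast hl
  have hj0 : 0 < D.pair i (lam + D.ρ) % (l : ℤ) := by
    rcases (Int.emod_nonneg (D.pair i (lam + D.ρ)) (by omega : (l : ℤ) ≠ 0)).lt_or_eq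
      with h | h
    · exact h
    · exact absurd (Int.dvd_of_emod_eq_zero h.symm) h2
  have hA : D.pair i (lam + ν + D.ρ) = D.pair i (lam + D.ρ) := by
    have e : lam + ν + D.ρ = (lam + D.ρ) + ν := by abel
    rw [e, map_add, hν, add_zero]
  have hmodA : D.pair i (lam + ν + D.ρ) % (l : ℤ) = D.pair i (lam + D.ρ) % (l : ℤ) := by
    rw [hA]
  have mem := shapeJ_mem D l hl i (lam + ν) (D.pair i (lam + D.ρ) % (l : ℤ)) hmodA hj0
  have z1 : D.dot (D.s i) lam + ν = D.dot (D.s i) (lam + ν) := by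
    simp only [dot_s]; rw [hA]; module
  have z2 : lam - (D.pair i (lam + D.ρ) % (l : ℤ)) • D.α i + ν =
      lam + ν - (D.pair i (lam + D.ρ) % (l : ℤ)) • D.α i := by
    module
  have z3 : D.dot (D.s i) (lam - (D.pair i (lam + D.ρ) % (l : ℤ)) • D.α i) + ν =
      D.dot (D.s i) (lam + ν - (D.pair i (lam + D.ρ) % (l : ℤ)) • D.α i) := by
    simp only [dot_s]
    rw [pair_sub_smul, pair_sub_smul, hA]
    module
  have eq : shf ν (ket (D.dot (D.s i) lam) +
        tHalf • ket (D.dot (D.s i) (D.lamOne l i lam)) +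
        ket (D.lamOne l i lam) + tHalf • ket lam) =
      shapeJ D i (lam + ν) (D.pair i (lam + D.ρ) % (l : ℤ)) := by
    rw [lamOne_eq]
    simp only [shapeJ, shf_add, shf_smul, shf_ket]
    rw [z1, z3, z2]
  rw [eq]; exact mem

/-! #### The action of an invariant `g` preserves `I` -/

lemma opX_shf (mu : Λ) (v : V Λ) :
    D.opX l mu v = shf (-((l : ℕ) • (Multiplicative.toAdd (D.σ D.w0) mu))) v := by
  unfold RootData.opX shf
  rw [Finsupp.lmapDomain_apply]
  have hf : (fun gam : Λ => gam - (l : ℕ) • Multiplicative.toAdd (D.σ D.w0) mu) =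
      (· + -((l : ℕ) • (Multiplicative.toAdd (D.σ D.w0) mu))) := by
    funext gam; rw [sub_eq_add_neg]
  rw [hf]

lemma opX_single (mu x : Λ) (c : K) :
    D.opX l mu (Finsupp.single x c) = Finsupp.single (x - (l : ℕ) • Multiplicative.toAdd (D.σ D.w0) mu) c := by
  unfold RootData.opX
  rw [Finsupp.lmapDomain_apply, Finsupp.mapDomain_single]

lemma act_gen (g : Λ →₀ ℤ)
    (hg : ∀ (w : W) (nu : Λ), g (Multiplicative.toAdd (D.σ w) nu) = g nu) (i : Fin D.n) (x : V Λ)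
    (hkey : ∀ (ν : Λ) (m : ℤ), D.pair i ν = (l : ℤ) * m →
      shf ν x + shf (ν - ((l : ℤ) * m) • D.α i) x ∈ D.Idl l)
    (hkey0 : ∀ ν : Λ, D.pair i ν = 0 → shf ν x ∈ D.Idl l) :
    D.actZX l g x ∈ D.Idl l := by
  set u : W := D.w0⁻¹ * D.s i * D.w0 with hu
  have comm1 : ∀ μ : Λ, Multiplicative.toAdd (D.σ D.w0) (Multiplicative.toAdd (D.σ u) μ) = Multiplicative.toAdd (D.σ (D.s i)) (Multiplicative.toAdd (D.σ D.w0) μ) := by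
    intro μ
    rw [← AddAut.add_apply, ← toAdd_mul, ← map_mul]
    have e : D.w0 * u = D.s i * D.w0 := by rw [hu]; group
    rw [e, map_mul, toAdd_mul, AddAut.add_apply]
  have usq : ∀ μ : Λ, Multiplicative.toAdd (D.σ u) (Multiplicative.toAdd (D.σ u) μ) = μ := by
    intro μ
    rw [← AddAut.add_apply, ← toAdd_mul, ← map_mul]
    have e : u * u = 1 := by
      rw [hu]
      have e2 : D.w0⁻¹ * D.s i * D.w0 * (D.w0⁻¹ * D.s i * D.w0) =
          D.w0⁻¹ * (D.s i * D.s i) * D.w0 := by group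
      rw [e2, D.s_sq]; group
    rw [e, map_one, toAdd_one, AddAut.zero_apply]
  set π := (D.Idl l).mkQ with hπ
  have hmain : π (D.actZX l g x) = 0 := by
    have hsum : D.actZX l g x = ∑ μ ∈ g.support, g μ • D.opX l μ x := rfl
    rw [hsum, map_sum]
    have hc : ∀ μ ∈ g.support, π (g μ • D.opX l μ x) = g μ • π (D.opX l μ x) := by
      intro μ _; exact map_zsmul π _ _
    rw [Finset.sum_congr rfl hc]
    apply Finset.sum_involution (fun μ _ => Multiplicative.toAdd (D.σ u) μ)
    · -- paired terms cancel
      intro μ hμ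
      have hνm : D.pair i (-((l : ℕ) • (Multiplicative.toAdd (D.σ D.w0) μ))) =
          (l : ℤ) * (-(D.pair i (Multiplicative.toAdd (D.σ D.w0) μ))) := by
        rw [map_neg, map_nsmul, nsmul_eq_mul]; ring
      have hmem := hkey (-((l : ℕ) • (Multiplicative.toAdd (D.σ D.w0) μ))) (-(D.pair i (Multiplicative.toAdd (D.σ D.w0) μ))) hνm
      have hτ : -((l : ℕ) • (Multiplicative.toAdd (D.σ D.w0) (Multiplicative.toAdd (D.σ u) μ))) =
          -((l : ℕ) • (Multiplicative.toAdd (D.σ D.w0) μ)) -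
            ((l : ℤ) * (-(D.pair i (Multiplicative.toAdd (D.σ D.w0) μ)))) • D.α i := by
        rw [comm1, D.reflect]
        module
      rw [hg u μ, opX_shf, opX_shf, hτ, ← smul_add, ← map_add]
      have h0 : π (shf (-((l : ℕ) • (Multiplicative.toAdd (D.σ D.w0) μ))) x +
          shf (-((l : ℕ) • (Multiplicative.toAdd (D.σ D.w0) μ)) -
            ((l : ℤ) * (-(D.pair i (Multiplicative.toAdd (D.σ D.w0) μ)))) • D.α i) x) = 0 := by
        rw [hπ, Submodule.mkQ_apply, Submodule.Quotient.mk_eq_zero]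
        exact hmem
      rw [h0, smul_zero]
    · -- fixed points contribute zero
      intro μ hμ hfne
      intro heq
      apply hfne
      have hfix : Multiplicative.toAdd (D.σ (D.s i)) (Multiplicative.toAdd (D.σ D.w0) μ) = Multiplicative.toAdd (D.σ D.w0) μ := by rw [← comm1, heq]
      have hc1 : D.pair i (Multiplicative.toAdd (D.σ D.w0) μ) • D.α i = 0 := by
        have h2 : Multiplicative.toAdd (D.σ D.w0) μ - D.pair i (Multiplicative.toAdd (D.σ D.w0) μ) • D.α i = Multiplicative.toAdd (D.σ D.w0) μ := by
          rw [← D.reflect]; exact hfix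
        exact sub_eq_self.mp h2
      have hc0 : D.pair i (Multiplicative.toAdd (D.σ D.w0) μ) = 0 := by
        have h3 := congrArg (D.pair i) hc1
        rw [map_zsmul, D.pair_alpha_self, map_zero, smul_eq_mul] at h3
        omega
      have hν0 : D.pair i (-((l : ℕ) • (Multiplicative.toAdd (D.σ D.w0) μ))) = 0 := by
        rw [map_neg, map_nsmul, nsmul_eq_mul, hc0]; ring
      rw [opX_shf]
      have h0 : π (shf (-((l : ℕ) • (Multiplicative.toAdd (D.σ D.w0) μ))) x) = 0 := by
        rw [hπ, Submodule.mkQ_apply, Submodule.Quotient.mk_eq_zero]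
        exact hkey0 _ hν0
      rw [h0, smul_zero]
    · -- the involution preserves the support
      intro μ hμ
      rw [Finsupp.mem_support_iff] at hμ ⊢
      rwa [hg u μ]
    · -- it is an involution
      intro μ hμ
      exact usq μ
  have h1 : Submodule.Quotient.mk (D.actZX l g x) = (0 : V Λ ⧸ D.Idl l) := by
    rwa [hπ, Submodule.mkQ_apply] at hmain
  exact (Submodule.Quotient.mk_eq_zero _).mp h1

lemma actZX_zero (g : Λ →₀ ℤ) : D.actZX l g 0 = 0 := by
  unfold RootData.actZX
  simp

lemma actZX_add (g : Λ →₀ ℤ) (x y : V Λ) :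
    D.actZX l g (x + y) = D.actZX l g x + D.actZX l g y := by
  unfold RootData.actZX
  rw [← Finsupp.sum_add]
  apply Finsupp.sum_congr
  intro μ _
  rw [map_add, smul_add]

lemma actZX_smul (g : Λ →₀ ℤ) (c : K) (x : V Λ) :
    D.actZX l g (c • x) = c • D.actZX l g x := by
  unfold RootData.actZX
  rw [Finsupp.smul_sum]
  apply Finsupp.sum_congr
  intro μ _
  rw [map_smul, smul_comm]

lemma actZX_sub (g : Λ →₀ ℤ) (x y : V Λ) :
    D.actZX l g (x - y) = D.actZX l g x - D.actZX l g y := by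
  unfold RootData.actZX
  rw [← Finsupp.sum_sub]
  apply Finsupp.sum_congr
  intro μ _
  rw [map_sub, smul_sub]

/-- The level `-(l+h)` action of a `W₀`-invariant element of `ℤ[X]` preserves `I`. -/
lemma actZX_mem (hl : 0 < l) (g : Λ →₀ ℤ)
    (hg : ∀ (w : W) (nu : Λ), g (Multiplicative.toAdd (D.σ w) nu) = g nu)
    {v : V Λ} (hv : v ∈ D.Idl l) : D.actZX l g v ∈ D.Idl l := by
  rw [RootData.Idl] at hv
  induction hv using Submodule.span_induction with
  | mem x hx =>
    rcases hx with (h | h) | h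
    · obtain ⟨i, lam, ⟨k, hk0, hkeq⟩, rfl⟩ := h
      have hdvd : (l : ℤ) ∣ D.pair i (lam + D.ρ) := ⟨k, by rw [hkeq]; ring⟩
      apply act_gen D l g hg i
      · intro ν m hν; exact keyA D l i lam ν m hν hdvd
      · intro ν hν; exact keyA0 D l i lam ν hν hdvd
    · obtain ⟨i, lam, h1, h2, rfl⟩ := h
      apply act_gen D l g hg i
      · intro ν m hν; exact keyB D l hl i lam ν m hν h1 h2
      · intro ν hν; exact keyB0 D l i lam ν hν h1 h2
    · obtain ⟨i, lam, h1, h2, rfl⟩ := h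
      apply act_gen D l g hg i
      · intro ν m hν; exact keyC D l hl i lam ν m hν h1 h2
      · intro ν hν; exact keyC0 D l hl i lam ν hν h1 h2
  | zero => rw [actZX_zero]; exact zero_mem _
  | add x y hx hy ihx ihy => rw [actZX_add]; exact add_mem ihx ihy
  | smul c x hx ih => rw [actZX_smul]; exact Submodule.smul_mem _ _ ih

/-! #### The bar involution commutes with the action of an invariant `g` -/

lemma barV_zero : D.barV l 0 = 0 := by simp [RootData.barV]

/-- `barV` as an additive homomorphism. -/
def barH : V Λ →+ V Λ where
  toFun := D.barV l
  map_zero' := barV_zero D l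
  map_add' := by
    intro u v
    show D.barV l (u + v) = D.barV l u + D.barV l v
    unfold RootData.barV
    apply Finsupp.sum_add_index'
    · intro lam; simp
    · intro lam c1 c2; rw [map_add, add_mul, add_smul]

lemma barV_add (u v : V Λ) : D.barV l (u + v) = D.barV l u + D.barV l v :=
  (barH D l).map_add u v

lemma barV_single (lam : Λ) (c : K) :
    D.barV l (Finsupp.single lam c) =
      (conjK c * D.barCoef l lam) • ket (D.dot D.w0 lam) := by
  unfold RootData.barV
  apply Finsupp.sum_single_index
  simp

lemma Ncount_shift (lam mu : Λ) :
    D.Ncount l (lam - (l : ℕ) • Multiplicative.toAdd (D.σ D.w0) mu) = D.Ncount l lam := by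
  unfold RootData.Ncount
  congr 1
  apply Finset.filter_congr
  intro f _
  have key : f (lam - (l : ℕ) • Multiplicative.toAdd (D.σ D.w0) mu + D.ρ) =
      f (lam + D.ρ) - (l : ℤ) * f (Multiplicative.toAdd (D.σ D.w0) mu) := by
    have e : lam - (l : ℕ) • Multiplicative.toAdd (D.σ D.w0) mu + D.ρ = (lam + D.ρ) - (l : ℕ) • Multiplicative.toAdd (D.σ D.w0) mu := by
      abel
    rw [e, map_sub, map_nsmul, nsmul_eq_mul]
  rw [key]
  constructor
  · intro h
    have h2 := dvd_add h (⟨f (Multiplicative.toAdd (D.σ D.w0) mu), rfl⟩ : (l : ℤ) ∣ (l : ℤ) * f (Multiplicative.toAdd (D.σ D.w0) mu))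
    rwa [sub_add_cancel] at h2
  · intro h
    exact dvd_sub h ⟨_, rfl⟩

lemma barCoef_shift (lam mu : Λ) :
    D.barCoef l (lam - (l : ℕ) • Multiplicative.toAdd (D.σ D.w0) mu) = D.barCoef l lam := by
  unfold RootData.barCoef
  rw [Ncount_shift]

lemma dot_w0_shift (lam mu : Λ) :
    D.dot D.w0 (lam - (l : ℕ) • Multiplicative.toAdd (D.σ D.w0) mu) =
      D.dot D.w0 lam - (l : ℕ) • Multiplicative.toAdd (D.σ D.w0) (Multiplicative.toAdd (D.σ D.w0) mu) := by
  unfold RootData.dot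
  have e : lam - (l : ℕ) • Multiplicative.toAdd (D.σ D.w0) mu + D.ρ = (lam + D.ρ) - (l : ℕ) • Multiplicative.toAdd (D.σ D.w0) mu := by
    abel
  rw [e, map_sub, map_nsmul]
  abel

lemma barV_opX (mu : Λ) (v : V Λ) :
    D.barV l (D.opX l mu v) = D.opX l (Multiplicative.toAdd (D.σ D.w0) mu) (D.barV l v) := by
  induction v using Finsupp.induction_linear with
  | zero => simp [barV_zero]
  | add f g hf hg => rw [map_add, barV_add, barV_add, map_add, hf, hg]
  | single lam c =>
    rw [opX_single, barV_single, barV_single, barCoef_shift, dot_w0_shift, map_smul]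
    have e : D.opX l (Multiplicative.toAdd (D.σ D.w0) mu) (ket (D.dot D.w0 lam)) =
        ket (D.dot D.w0 lam - (l : ℕ) • Multiplicative.toAdd (D.σ D.w0) (Multiplicative.toAdd (D.σ D.w0) mu)) :=
      opX_single D l (Multiplicative.toAdd (D.σ D.w0) mu) (D.dot D.w0 lam) 1
    rw [e]

lemma barV_actZX (g : Λ →₀ ℤ)
    (hg : ∀ (w : W) (nu : Λ), g (Multiplicative.toAdd (D.σ w) nu) = g nu) (v : V Λ) :
    D.barV l (D.actZX l g v) = D.actZX l g (D.barV l v) := by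
  have hexp : ∀ w : V Λ, D.actZX l g w = ∑ μ ∈ g.support, g μ • D.opX l μ w :=
    fun _ => rfl
  rw [hexp, hexp]
  rw [show D.barV l (∑ μ ∈ g.support, g μ • D.opX l μ v) =
      ∑ μ ∈ g.support, D.barV l (g μ • D.opX l μ v) from map_sum (barH D l) _ _]
  have step : ∀ μ ∈ g.support, D.barV l (g μ • D.opX l μ v) =
      g μ • D.opX l (Multiplicative.toAdd (D.σ D.w0) μ) (D.barV l v) := by
    intro μ _
    rw [show D.barV l (g μ • D.opX l μ v) = g μ • D.barV l (D.opX l μ v) from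
      map_zsmul (barH D l) _ _, barV_opX]
  rw [Finset.sum_congr rfl step]
  refine Finset.sum_nbij' (fun μ => Multiplicative.toAdd (D.σ D.w0) μ) (fun μ => Multiplicative.toAdd (D.σ D.w0⁻¹) μ) ?_ ?_ ?_ ?_ ?_
  · intro a ha
    rw [Finsupp.mem_support_iff] at ha ⊢
    rwa [hg D.w0 a]
  · intro a ha
    rw [Finsupp.mem_support_iff] at ha ⊢
    rwa [hg D.w0⁻¹ a]
  · intro a _
    show Multiplicative.toAdd (D.σ D.w0⁻¹) (Multiplicative.toAdd (D.σ D.w0) a) = a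
    rw [← AddAut.add_apply, ← toAdd_mul, ← map_mul, inv_mul_cancel, map_one, toAdd_one, AddAut.zero_apply]
  · intro a _
    show Multiplicative.toAdd (D.σ D.w0) (Multiplicative.toAdd (D.σ D.w0⁻¹) a) = a
    rw [← AddAut.add_apply, ← toAdd_mul, ← map_mul, mul_inv_cancel, map_one, toAdd_one, AddAut.zero_apply]
  · intro a _
    show g a • D.opX l (Multiplicative.toAdd (D.σ D.w0) a) (D.barV l v) = g (Multiplicative.toAdd (D.σ D.w0) a) • D.opX l (Multiplicative.toAdd (D.σ D.w0) a) (D.barV l v)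
    rw [hg D.w0 a]

end RootDataAux

end AuxSection
/-- step (a) of the proof of Theorem 1.2: assume `bar(I) ⊆ I`.
If `C ∈ V` satisfies `bar(C) - C ∈ I`, then for every `g ∈ ℤ[X]^{W₀}` one has
`bar(g · C) - g · C ∈ I`; that is, the class of `g · C` in `F_l = V/I` is fixed
by the induced bar involution. -/
theorem statement5 {Λ W : Type} [AddCommGroup Λ] [Group W] [Fintype W]
    (D : RootData Λ W) (l : ℕ) (hl : 0 < l)
    (hbar : ∀ x ∈ D.Idl l, D.barV l x ∈ D.Idl l)
    (C : V Λ) (hC : D.barV l C - C ∈ D.Idl l) :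
    ∀ g : Λ →₀ ℤ, (∀ (w : W) (nu : Λ), g (Multiplicative.toAdd (D.σ w) nu) = g nu) →
      D.barV l (D.actZX l g C) - D.actZX l g C ∈ D.Idl l := by
  intro g hg
  have hsub : D.barV l (D.actZX l g C) - D.actZX l g C = D.actZX l g (D.barV l C - C) := by
    rw [RootDataAux.barV_actZX D l g hg C, RootDataAux.actZX_sub]
  rw [hsub]
  exact RootDataAux.actZX_mem D l hl g hg hC
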